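/- Let m ≥ 1, n = 2^m, let d ≥ 1, N = n^d, and let S be a nonempty subset of (ZMod n)^d. Then there exist f ∈ S and a function G : (ZMod n)^d → ℂ whose support has cardinality at most |S|, such that every signal x : (ZMod n)^d → ℂ whose discrete Fourier transform x̂ vanishes outside S satisfies x̂(f) = N · ∑_{j ∈ (ZMod n)^d} x(j)·G(−j). -/

import Mathlib

open scoped BigOperators

/-- The `d`-dimensional discrete Fourier transform on `(ZMod n)^d`. -/
noncomputable def dft (n d : ℕ) [NeZero n] (x : (Fin d → ZMod n) → ℂ) :
    (Fin d → ZMod n) → ℂ :=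
  fun f => ∑ t : Fin d → ZMod n, x t *
    Complex.exp (-(2 * (Real.pi : ℂ) * Complex.I) *
      (((∑ q, f q * t q : ZMod n)).val : ℂ) / (n : ℂ))

namespace Stmt6Aux

variable (n : ℕ) [NeZero n]

noncomputable def psi : AddChar (ZMod n) ℂ :=
  AddChar.zmodChar n (ζ := (Complex.exp (2 * Real.pi * Complex.I / n))⁻¹)
    (by
      rw [inv_pow, inv_eq_one]
      exact (Complex.isPrimitiveRoot_exp n (NeZero.ne n)).pow_eq_one)

lemma psi_prim : AddChar.IsPrimitive (psi n) :=
  AddChar.zmodChar_primitive_of_primitive_root n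
    ((Complex.isPrimitiveRoot_exp n (NeZero.ne n)).inv)

lemma psi_apply (k : ZMod n) :
    psi n k = Complex.exp (-(2 * (Real.pi : ℂ) * Complex.I) * (k.val : ℂ) / (n : ℂ)) := by
  rw [psi, AddChar.zmodChar_apply, ← Complex.exp_neg, ← Complex.exp_nat_mul]
  congr 1
  ring

lemma psi_sum {ι : Type*} (s : Finset ι) (h : ι → ZMod n) :
    psi n (∑ q ∈ s, h q) = ∏ q ∈ s, psi n (h q) := by
  classical
  induction s using Finset.induction with
  | empty => simp
  | insert q s hq ih =>
      rw [Finset.sum_insert hq, Finset.prod_insert hq, AddChar.map_add_eq_mul, ih]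

lemma orth (d : ℕ) (a : Fin d → ZMod n) :
    ∑ g : Fin d → ZMod n, psi n (∑ q, g q * a q)
      = if a = 0 then (n : ℂ) ^ d else 0 := by
  classical
  have h1 : ∀ g : Fin d → ZMod n, psi n (∑ q, g q * a q) = ∏ q, psi n (g q * a q) :=
    fun g => psi_sum n _ _
  simp_rw [h1]
  rw [← Fintype.piFinset_univ, ← Finset.prod_univ_sum (fun _ : Fin d => (Finset.univ : Finset (ZMod n))) (fun q s => psi n (s * a q))]
  have hsum : ∀ q : Fin d, (∑ s : ZMod n, psi n (s * a q)) = if a q = 0 then (n : ℂ) else 0 := by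
    intro q
    rw [AddChar.sum_mulShift _ (psi_prim n)]
    simp [ZMod.card]
  simp_rw [hsum]
  by_cases ha : a = 0
  · simp [ha]
  · rw [if_neg ha]
    obtain ⟨q, hq⟩ : ∃ q, a q ≠ 0 := by
      by_contra h; push_neg at h; exact ha (funext h)
    exact Finset.prod_eq_zero (Finset.mem_univ q) (by simp [hq])

/-- orthogonality with the summation variable in the second slot -/
lemma orth' (d : ℕ) (a : Fin d → ZMod n) :
    ∑ g : Fin d → ZMod n, psi n (∑ q, a q * g q)
      = if a = 0 then (n : ℂ) ^ d else 0 := by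
  rw [← orth n d a]
  refine Finset.sum_congr rfl fun g _ => ?_
  congr 1
  exact Finset.sum_congr rfl fun q _ => mul_comm _ _

lemma dft_eq (d : ℕ) (x : (Fin d → ZMod n) → ℂ) (f : Fin d → ZMod n) :
    dft n d x f = ∑ t : Fin d → ZMod n, x t * psi n (∑ q, f q * t q) := by
  simp only [dft, psi_apply]

/-- Fourier inversion -/
lemma inv_formula (d : ℕ) (x : (Fin d → ZMod n) → ℂ) (j : Fin d → ZMod n) :
    ∑ g : Fin d → ZMod n, dft n d x g * psi n (∑ q, g q * (-j) q)
      = (n : ℂ) ^ d * x j := by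
  classical
  have h1 : ∀ g : Fin d → ZMod n, dft n d x g * psi n (∑ q, g q * (-j) q)
      = ∑ t : Fin d → ZMod n, x t * psi n (∑ q, g q * (t - j) q) := by
    intro g
    rw [dft_eq, Finset.sum_mul]
    refine Finset.sum_congr rfl fun t _ => ?_
    rw [mul_assoc, ← AddChar.map_add_eq_mul, ← Finset.sum_add_distrib]
    congr 2
    refine Finset.sum_congr rfl fun q _ => ?_
    simp only [Pi.sub_apply, Pi.neg_apply]
    ring
  simp_rw [h1]
  rw [Finset.sum_comm]
  have h2 : ∀ t : Fin d → ZMod n,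
      ∑ g : Fin d → ZMod n, x t * psi n (∑ q, g q * (t - j) q)
        = x t * (if t - j = 0 then (n : ℂ) ^ d else 0) := by
    intro t
    rw [← Finset.mul_sum, orth]
  simp_rw [h2, sub_eq_zero, mul_ite, mul_zero]
  rw [Finset.sum_ite_eq' Finset.univ j (fun t => x t * (n : ℂ) ^ d)]
  simp [mul_comm]

end Stmt6Aux

namespace Stmt6Aux
variable (n : ℕ) [NeZero n]

lemma span_top (d : ℕ) (S : Finset (Fin d → ZMod n)) :
    Submodule.span ℂ (Set.range (fun j : Fin d → ZMod n =>
      (fun g : ↥S => psi n (∑ q, (g : Fin d → ZMod n) q * (-j) q)))) = ⊤ := by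
  classical
  set v : (Fin d → ZMod n) → (↥S → ℂ) :=
    fun j g => psi n (∑ q, (g : Fin d → ZMod n) q * (-j) q) with hv
  rw [eq_top_iff]
  intro w _
  have hN : ((n : ℂ) ^ d) ≠ 0 := pow_ne_zero _ (Nat.cast_ne_zero.mpr (NeZero.ne n))
  have hbasis : ∀ h : ↥S,
      (fun g : ↥S => if h = g then (1:ℂ) else 0) ∈ Submodule.span ℂ (Set.range v) := by
    intro h
    have heq : (fun g : ↥S => if h = g then (1:ℂ) else 0)
        = ((n:ℂ)^d)⁻¹ • ∑ j : Fin d → ZMod n,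
            psi n (∑ q, (h : Fin d → ZMod n) q * j q) • v j := by
      funext g
      simp only [Pi.smul_apply, Finset.sum_apply, smul_eq_mul]
      have hterm : ∀ j : Fin d → ZMod n,
          psi n (∑ q, (h : Fin d → ZMod n) q * j q) * v j g
            = psi n (∑ q, j q * ((h : Fin d → ZMod n) - (g : Fin d → ZMod n)) q) := by
        intro j
        simp only [hv]
        rw [← AddChar.map_add_eq_mul, ← Finset.sum_add_distrib]
        congr 1
        refine Finset.sum_congr rfl fun q _ => ?_
        simp only [Pi.sub_apply, Pi.neg_apply]
        ring
      simp_rw [hterm]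
      rw [orth]
      have hiff : ((h : Fin d → ZMod n) - (g : Fin d → ZMod n) = 0) ↔ h = g := by
        rw [sub_eq_zero]
        exact ⟨fun hh => Subtype.ext hh, fun hh => by rw [hh]⟩
      by_cases hc : h = g
      · rw [if_pos hc, if_pos (hiff.mpr hc), inv_mul_cancel₀ hN]
      · rw [if_neg hc, if_neg (fun hh => hc (hiff.mp hh)), mul_zero]
    rw [heq]
    exact Submodule.smul_mem _ _ (Submodule.sum_mem _ fun j _ =>
      Submodule.smul_mem _ _ (Submodule.subset_span ⟨j, rfl⟩))
  have hw : w = ∑ h : ↥S, w h • (fun g : ↥S => if h = g then (1:ℂ) else 0) :=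
    pi_eq_sum_univ w
  rw [hw]
  exact Submodule.sum_mem _ fun h _ => Submodule.smul_mem _ _ (hbasis h)

end Stmt6Aux

theorem stmt6 (m : ℕ) (hm : 1 ≤ m) (n : ℕ) (hn : n = 2 ^ m) [NeZero n]
    (d : ℕ) (hd : 1 ≤ d) (S : Finset (Fin d → ZMod n)) (hS : S.Nonempty) :
    ∃ f ∈ S, ∃ G : (Fin d → ZMod n) → ℂ,
      (Function.support G).ncard ≤ S.card ∧
      ∀ x : (Fin d → ZMod n) → ℂ,
        (∀ f', f' ∉ S → dft n d x f' = 0) →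
        dft n d x f = (n : ℂ) ^ d * ∑ j : Fin d → ZMod n, x j * G (-j) := by
  classical
  obtain ⟨f, hf⟩ := hS
  have hN : ((n : ℂ) ^ d) ≠ 0 := pow_ne_zero _ (Nat.cast_ne_zero.mpr (NeZero.ne n))
  set v : (Fin d → ZMod n) → (↥S → ℂ) :=
    fun j g => Stmt6Aux.psi n (∑ q, (g : Fin d → ZMod n) q * (-j) q) with hv
  obtain ⟨t, hts, htspan, htind⟩ := exists_linearIndependent ℂ (Set.range v)
  have htfin : t.Finite := htind.setFinite
  set tf : Finset (↥S → ℂ) := htfin.toFinset with htf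
  have htfcoe : (↑tf : Set (↥S → ℂ)) = t := htfin.coe_toFinset
  have hcard : tf.card ≤ S.card := by
    have h1 : LinearIndependent ℂ (fun u : ↥(↑tf : Set (↥S → ℂ)) => (u : ↥S → ℂ)) := by
      rw [htfcoe]; exact htind
    have h2 : tf.card ≤ Module.finrank ℂ (↥S → ℂ) :=
      LinearIndependent.finset_card_le_finrank h1
    rwa [Module.finrank_fintype_fun_eq_card, Fintype.card_coe] at h2
  -- the delta function at ⟨f, hf⟩ lies in the span of tf
  have hδ : (fun g : ↥S => if (⟨f, hf⟩ : ↥S) = g then (1:ℂ) else 0)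
      ∈ Submodule.span ℂ (↑tf : Set (↥S → ℂ)) := by
    rw [htfcoe, htspan, Stmt6Aux.span_top n d S]
    trivial
  obtain ⟨a, -, ha⟩ := Submodule.mem_span_finset.mp hδ
  -- choose preimages under v
  set σ : (↥S → ℂ) → (Fin d → ZMod n) :=
    fun u => if h : ∃ j, v j = u then h.choose else 0 with hσdef
  have hσ : ∀ u ∈ tf, v (σ u) = u := by
    intro u hu
    have hut : u ∈ t := by rwa [← htfcoe]
    have hur : u ∈ Set.range v := hts hut
    have hex : ∃ j, v j = u := hur
    simp only [hσdef, dif_pos hex]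
    exact hex.choose_spec
  set c : (Fin d → ZMod n) → ℂ := fun j => ∑ u ∈ tf, if σ u = j then a u else 0 with hc
  refine ⟨f, hf, fun k => c (-k), ?_, ?_⟩
  · -- support bound
    have hsub : Function.support (fun k => c (-k))
        ⊆ ↑((tf.image σ).image (fun j => -j)) := by
      intro k hk
      have hk' : c (-k) ≠ 0 := hk
      have hex : ∃ u ∈ tf, σ u = -k := by
        by_contra hcon
        push_neg at hcon
        exact hk' (Finset.sum_eq_zero fun u hu => if_neg (hcon u hu))
      obtain ⟨u, hu, hequ⟩ := hex
      have : -(σ u) = k := by rw [hequ, neg_neg]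
      refine Finset.mem_coe.mpr (Finset.mem_image.mpr ⟨σ u, Finset.mem_image.mpr ⟨u, hu, rfl⟩, this⟩)
    calc (Function.support (fun k => c (-k))).ncard
        ≤ (↑((tf.image σ).image (fun j => -j)) : Set (Fin d → ZMod n)).ncard :=
          Set.ncard_le_ncard hsub (Set.toFinite _)
      _ = ((tf.image σ).image (fun j => -j)).card := Set.ncard_coe_finset _
      _ ≤ (tf.image σ).card := Finset.card_image_le
      _ ≤ tf.card := Finset.card_image_le
      _ ≤ S.card := hcard
  · -- the identity
    intro x hx
    -- inversion restricted to S
    have hinvS : ∀ j : Fin d → ZMod n,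
        ∑ g : ↥S, dft n d x ↑g * v j g = (n : ℂ) ^ d * x j := by
      intro j
      have e1 : ∑ g : ↥S, dft n d x ↑g * v j g
          = ∑ g ∈ S, dft n d x g * Stmt6Aux.psi n (∑ q, g q * (-j) q) :=
        Finset.sum_coe_sort S (fun g => dft n d x g * Stmt6Aux.psi n (∑ q, g q * (-j) q))
      rw [e1]
      rw [Finset.sum_subset (Finset.subset_univ S)
        (fun g _ hg => by rw [hx g hg, zero_mul])]
      exact Stmt6Aux.inv_formula n d x j
    have step1 : ∑ j : Fin d → ZMod n, x j * c (- -j) = ∑ u ∈ tf, a u * x (σ u) := by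
      have e0 : ∀ j : Fin d → ZMod n, x j * c (- -j) = c j * x j := by
        intro j; rw [neg_neg, mul_comm]
      simp_rw [e0, hc, Finset.sum_mul]
      rw [Finset.sum_comm]
      refine Finset.sum_congr rfl fun u hu => ?_
      simp_rw [ite_mul, zero_mul]
      rw [Finset.sum_ite_eq Finset.univ (σ u) (fun j => a u * x j)]
      simp
    have step2 : ∑ u ∈ tf, a u * x (σ u)
        = ((n : ℂ) ^ d)⁻¹ * dft n d x f := by
      have e1 : ∀ u ∈ tf, a u * x (σ u)
          = ((n : ℂ) ^ d)⁻¹ * ∑ g : ↥S, dft n d x ↑g * (a u * u g) := by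
        intro u hu
        have hxσ : x (σ u) = ((n : ℂ) ^ d)⁻¹ * ∑ g : ↥S, dft n d x ↑g * v (σ u) g := by
          rw [hinvS (σ u), ← mul_assoc, inv_mul_cancel₀ hN, one_mul]
        rw [hxσ, hσ u hu, Finset.mul_sum, Finset.mul_sum, Finset.mul_sum]
        refine Finset.sum_congr rfl fun g _ => ?_
        ring
      rw [Finset.sum_congr rfl e1, ← Finset.mul_sum]
      congr 1
      rw [Finset.sum_comm]
      have e2 : ∀ g : ↥S, ∑ u ∈ tf, dft n d x ↑g * (a u * u g)
          = dft n d x ↑g * (if (⟨f, hf⟩ : ↥S) = g then (1:ℂ) else 0) := by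
        intro g
        rw [← Finset.mul_sum]
        congr 1
        have := congrFun ha g
        simpa [Finset.sum_apply] using this
      simp_rw [e2, mul_ite, mul_one, mul_zero]
      rw [Finset.sum_ite_eq Finset.univ (⟨f, hf⟩ : ↥S) (fun g => dft n d x ↑g)]
      simp
    rw [step1, step2, ← mul_assoc, mul_inv_cancel₀ hN, one_mul]
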